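/- Let P(x) = 1 + 10x + x² + 20010x³ + 2001x⁴ + 2001x⁵ and Q(x) = 1 + 10x + x² + 10x³ + x⁴ + x⁵. Then P ≥_FV Q holds, but P ≥_VAR Q fails; indeed V_P(1) = 68604293/192384192 < 293/192 = V_Q(1). -/

import Mathlib

open Polynomial

/-- The "variance fraction" functional of a polynomial:
`V_P(x) = (x² P″(x) + x P′(x))/P(x) − x² P′(x)²/P(x)²`. -/
noncomputable def Vp (P : Polynomial ℝ) (x : ℝ) : ℝ :=
  (x ^ 2 * (Polynomial.derivative (Polynomial.derivative P)).eval x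
      + x * (Polynomial.derivative P).eval x) / P.eval x
    - x ^ 2 * ((Polynomial.derivative P).eval x) ^ 2 / (P.eval x) ^ 2

/-- For `P = 1+10x+x²+20010x³+2001x⁴+2001x⁵` and `Q = 1+10x+x²+10x³+x⁴+x⁵`,
`P ≥_FV Q` holds but `P ≥_VAR Q` fails; indeed
`V_P(1) = 68604293/192384192 < 293/192 = V_Q(1)`. -/
theorem stmt10 :
    let P : Polynomial ℝ := C 1 + C 10 * X + C 1 * X ^ 2 + C 20010 * X ^ 3
      + C 2001 * X ^ 4 + C 2001 * X ^ 5
    let Q : Polynomial ℝ := C 1 + C 10 * X + C 1 * X ^ 2 + C 10 * X ^ 3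
      + C 1 * X ^ 4 + C 1 * X ^ 5
    (∀ k : ℕ, k ≤ 4 → P.coeff k * Q.coeff (k + 1) ≤ Q.coeff k * P.coeff (k + 1)) ∧
      ¬ (∀ x : ℝ, 0 ≤ x → Vp Q x ≤ Vp P x) ∧
      Vp P 1 = 68604293 / 192384192 ∧ Vp Q 1 = 293 / 192 ∧ Vp P 1 < Vp Q 1 := by
  intro P Q
  have hP1 : Vp P 1 = 68604293 / 192384192 := by
    simp only [Vp, P, map_add, map_mul, derivative_C, derivative_X, derivative_X_pow,
      eval_add, eval_mul, eval_pow, eval_C, eval_X, eval_one, eval_natCast, derivative_mul]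
    norm_num
  have hQ1 : Vp Q 1 = 293 / 192 := by
    simp only [Vp, Q, map_add, map_mul, derivative_C, derivative_X, derivative_X_pow,
      eval_add, eval_mul, eval_pow, eval_C, eval_X, eval_one, eval_natCast, derivative_mul]
    norm_num
  refine ⟨?_, ?_, hP1, hQ1, by rw [hP1, hQ1]; norm_num⟩
  · intro k hk
    interval_cases k <;>
      simp [P, Q, coeff_add, coeff_C, coeff_X, coeff_X_pow, coeff_C_mul, coeff_one] <;> norm_num
  · intro h
    have := h 1 (by norm_num)
    rw [hP1, hQ1] at this
    norm_num at this
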